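/- Let B be an interval building set on [n] and let [i,j] ∈ B with i < j be non-elementary. Define ℓ = min{k ∈ [i+1,j] : [k,j] ∈ B} and r = max{k ∈ [i,j−1] : [i,k] ∈ B}. Then ℓ ≤ r, the intervals [i,r] and [ℓ,j] are the only two inclusion-maximal strict subblocks of [i,j], their union is [i,j], and their intersection is [ℓ,r]. -/

import Mathlib

/-- A building set on the ground set `Vs ⊆ ℕ`. -/
def IsBuildingSetOn (Vs : Finset ℕ) (B : Finset (Finset ℕ)) : Prop :=
  (∀ b ∈ B, b.Nonempty ∧ b ⊆ Vs) ∧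
  (∀ b₁ ∈ B, ∀ b₂ ∈ B, (b₁ ∩ b₂).Nonempty → b₁ ∪ b₂ ∈ B) ∧
  (∀ v ∈ Vs, {v} ∈ B)

/-- An interval building set on `[n] = {1, …, n}`: every block is an interval. -/
def IsIntervalBuildingSet (n : ℕ) (B : Finset (Finset ℕ)) : Prop :=
  IsBuildingSetOn (Finset.Icc 1 n) B ∧ ∀ b ∈ B, ∃ a c, b = Finset.Icc a c

/-- `M` is an inclusion-maximal block of `B` strictly contained in `P`. -/
def MaxIn (B : Finset (Finset ℕ)) (P M : Finset ℕ) : Prop :=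
  M ∈ B ∧ M ⊂ P ∧ ∀ C ∈ B, M ⊂ C → ¬ C ⊂ P

/-- The block `P` is elementary. -/
def Elementary (B : Finset (Finset ℕ)) (P : Finset ℕ) : Prop :=
  ∀ B' ∈ B, ∀ B'' ∈ B, B' ≠ P → B'' ≠ P → P = B' ∪ B'' → B' ∩ B'' = ∅

/-- Bounds of a nonempty subinterval. -/
lemma bounds_of_sub {a b i j : ℕ} (hab : a ≤ b) (h : Finset.Icc a b ⊆ Finset.Icc i j) :
    i ≤ a ∧ b ≤ j := by
  have ha := h (Finset.mem_Icc.mpr ⟨le_refl a, hab⟩)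
  have hb := h (Finset.mem_Icc.mpr ⟨hab, le_refl b⟩)
  rw [Finset.mem_Icc] at ha hb
  omega

/-- Strict inclusion of intervals from bounds. -/
lemma icc_ssub {a b c d : ℕ} (h1 : c ≤ a) (h2 : b ≤ d) (h3 : c < a ∨ b < d) (hcd : c ≤ d) :
    Finset.Icc a b ⊂ Finset.Icc c d := by
  constructor
  · exact Finset.Icc_subset_Icc h1 h2
  · intro h
    rcases h3 with h3 | h3
    · have := h (Finset.mem_Icc.mpr ⟨le_refl c, hcd⟩)
      rw [Finset.mem_Icc] at this; omega
    · have := h (Finset.mem_Icc.mpr ⟨hcd, le_refl d⟩)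
      rw [Finset.mem_Icc] at this; omega

theorem stmt18 (n : ℕ) (B : Finset (Finset ℕ)) (hB : IsIntervalBuildingSet n B)
    (i j : ℕ) (hij : i < j) (hP : Finset.Icc i j ∈ B)
    (hnotel : ¬ Elementary B (Finset.Icc i j))
    (l r : ℕ)
    (hl1 : i < l) (hl2 : l ≤ j) (hl3 : Finset.Icc l j ∈ B)
    (hlmin : ∀ k, i < k → k ≤ j → Finset.Icc k j ∈ B → l ≤ k)
    (hr1 : i ≤ r) (hr2 : r < j) (hr3 : Finset.Icc i r ∈ B)
    (hrmax : ∀ k, i ≤ k → k < j → Finset.Icc i k ∈ B → k ≤ r) :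
    l ≤ r ∧
    MaxIn B (Finset.Icc i j) (Finset.Icc i r) ∧
    MaxIn B (Finset.Icc i j) (Finset.Icc l j) ∧
    (∀ M, MaxIn B (Finset.Icc i j) M → M = Finset.Icc i r ∨ M = Finset.Icc l j) ∧
    Finset.Icc i r ∪ Finset.Icc l j = Finset.Icc i j ∧
    Finset.Icc i r ∩ Finset.Icc l j = Finset.Icc l r := by
  obtain ⟨⟨hBmem, hBunion, hBsingle⟩, hBint⟩ := hB
  -- Step 1: l ≤ r, using non-elementarity.
  have hlr : l ≤ r := by
    unfold Elementary at hnotel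
    push_neg at hnotel
    obtain ⟨X, hX, Y, hY, hXP, hYP, hun, hne⟩ := hnotel
    obtain ⟨a, b, rfl⟩ := hBint X hX
    obtain ⟨c, d, rfl⟩ := hBint Y hY
    have hXsub : Finset.Icc a b ⊆ Finset.Icc i j := hun ▸ Finset.subset_union_left
    have hYsub : Finset.Icc c d ⊆ Finset.Icc i j := hun ▸ Finset.subset_union_right
    obtain ⟨x, hx⟩ := hne
    rw [Finset.mem_inter, Finset.mem_Icc, Finset.mem_Icc] at hx
    have hab : a ≤ b := le_trans hx.1.1 hx.1.2
    have hcd : c ≤ d := le_trans hx.2.1 hx.2.2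
    obtain ⟨hia, hbj⟩ := bounds_of_sub hab hXsub
    obtain ⟨hic, hdj⟩ := bounds_of_sub hcd hYsub
    have hiu : (i : ℕ) ∈ Finset.Icc a b ∪ Finset.Icc c d := by
      rw [← hun, Finset.mem_Icc]; omega
    have hju : (j : ℕ) ∈ Finset.Icc a b ∪ Finset.Icc c d := by
      rw [← hun, Finset.mem_Icc]; omega
    rw [Finset.mem_union, Finset.mem_Icc, Finset.mem_Icc] at hiu hju
    have hXneq : ¬ (a = i ∧ b = j) := by
      rintro ⟨rfl, rfl⟩; exact hXP rfl
    have hYneq : ¬ (c = i ∧ d = j) := by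
      rintro ⟨rfl, rfl⟩; exact hYP rfl
    rcases hiu with hiX | hiY
    · -- a = i
      have ha : a = i := by omega
      have hbj' : b < j := by
        rcases hju with hjX | hjY
        · omega
        · by_contra h
          omega
      rcases hju with hjX | hjY
      · omega
      · have hd : d = j := by omega
        have hc : i < c := by omega
        have h1 : l ≤ c := hlmin c hc (by omega) (by rw [← hd]; exact hY)
        have h2 : b ≤ r := hrmax b (by omega) hbj' (by rw [← ha]; exact hX)
        omega
    · -- c = i
      have hc : c = i := by omega
      rcases hju with hjX | hjY
      · have hb : b = j := by omega
        have ha : i < a := by omega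
        have hd' : d < j := by omega
        have h1 : l ≤ a := hlmin a ha (by omega) (by rw [← hb]; exact hX)
        have h2 : d ≤ r := hrmax d (by omega) hd' (by rw [← hc]; exact hY)
        omega
      · have hd : d = j := by omega
        exact absurd ⟨hc, hd⟩ hYneq
  -- Step 2: MaxIn for [i, r]
  have hMir : MaxIn B (Finset.Icc i j) (Finset.Icc i r) := by
    refine ⟨hr3, icc_ssub (le_refl i) hr2.le (Or.inr hr2) (by omega), ?_⟩
    intro C hC hMC hCP
    obtain ⟨a, b, rfl⟩ := hBint C hC
    have hi' : (i : ℕ) ∈ Finset.Icc a b := hMC.1 (Finset.mem_Icc.mpr ⟨le_refl i, hr1⟩)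
    have hr' : (r : ℕ) ∈ Finset.Icc a b := hMC.1 (Finset.mem_Icc.mpr ⟨hr1, le_refl r⟩)
    rw [Finset.mem_Icc] at hi' hr'
    have hab : a ≤ b := by omega
    obtain ⟨hia, hbj⟩ := bounds_of_sub hab hCP.1
    have ha : a = i := by omega
    have hbj' : b < j := by
      rcases Nat.lt_or_ge b j with h | h
      · exact h
      · exfalso
        have : b = j := by omega
        rw [ha, this] at hCP
        exact (ssubset_irrefl _) hCP
    have hbr : b ≤ r := hrmax b (by omega) hbj' (by rw [← ha]; exact hC)
    exact hMC.2 (Finset.Icc_subset_Icc (by omega) hbr)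
  -- Step 3: MaxIn for [l, j]
  have hMlj : MaxIn B (Finset.Icc i j) (Finset.Icc l j) := by
    refine ⟨hl3, icc_ssub hl1.le (le_refl j) (Or.inl hl1) (by omega), ?_⟩
    intro C hC hMC hCP
    obtain ⟨a, b, rfl⟩ := hBint C hC
    have hl' : (l : ℕ) ∈ Finset.Icc a b := hMC.1 (Finset.mem_Icc.mpr ⟨le_refl l, hl2⟩)
    have hj' : (j : ℕ) ∈ Finset.Icc a b := hMC.1 (Finset.mem_Icc.mpr ⟨hl2, le_refl j⟩)
    rw [Finset.mem_Icc] at hl' hj'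
    have hab : a ≤ b := by omega
    obtain ⟨hia, hbj⟩ := bounds_of_sub hab hCP.1
    have hb : b = j := by omega
    have hia' : i < a := by
      rcases Nat.lt_or_ge i a with h | h
      · exact h
      · exfalso
        have : a = i := by omega
        rw [this, hb] at hCP
        exact (ssubset_irrefl _) hCP
    have hla : l ≤ a := hlmin a hia' (by omega) (by rw [← hb]; exact hC)
    exact hMC.2 (Finset.Icc_subset_Icc hla (by omega))
  refine ⟨hlr, hMir, hMlj, ?_, ?_, ?_⟩
  · -- uniqueness
    intro M hM
    obtain ⟨a, b, rfl⟩ := hBint M hM.1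
    have hab : a ≤ b := by
      obtain ⟨hne, _⟩ := hBmem _ hM.1
      rwa [Finset.nonempty_Icc] at hne
    obtain ⟨hia, hbj⟩ := bounds_of_sub hab hM.2.1.1
    have hne : ¬ (a = i ∧ b = j) := by
      rintro ⟨rfl, rfl⟩; exact (ssubset_irrefl _) hM.2.1
    rcases Nat.lt_or_ge b j with hbj' | hbj'
    · -- b < j
      rcases Nat.lt_or_ge r a with har | har
      · -- a > r : M ⊆ [l, j] strictly; contradiction with maximality
        exfalso
        refine hM.2.2 (Finset.Icc l j) hl3 ?_
          (icc_ssub hl1.le (le_refl j) (Or.inl hl1) (by omega))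
        exact icc_ssub (by omega) hbj'.le (Or.inr hbj') (by omega)
      · -- a ≤ r
        rcases Nat.lt_or_ge i a with hia' | hia'
        · -- i < a ≤ r : union with [i, r]
          exfalso
          have hun : Finset.Icc a b ∪ Finset.Icc i r ∈ B := by
            refine hBunion _ hM.1 _ hr3 ⟨a, ?_⟩
            rw [Finset.mem_inter, Finset.mem_Icc, Finset.mem_Icc]; omega
          have heq : Finset.Icc a b ∪ Finset.Icc i r = Finset.Icc i (max b r) := by
            ext x
            rw [Finset.mem_union, Finset.mem_Icc, Finset.mem_Icc, Finset.mem_Icc]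
            omega
          rw [heq] at hun
          have : max b r ≤ r := hrmax _ (by omega) (by omega) hun
          have hbr : b ≤ r := by omega
          exact hM.2.2 (Finset.Icc i r) hr3
            (icc_ssub (by omega) hbr (Or.inl hia') (by omega))
            (icc_ssub (le_refl i) hr2.le (Or.inr hr2) (by omega))
        · -- a = i, b < j : M ⊆ [i, r]
          have ha : a = i := by omega
          have hbr : b ≤ r := hrmax b (by omega) hbj' (by rw [← ha]; exact hM.1)
          left
          rcases Nat.lt_or_ge b r with hbr' | hbr'
          · exfalso
            exact hM.2.2 (Finset.Icc i r) hr3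
              (icc_ssub (by omega) hbr'.le (Or.inr hbr') (by omega))
              (icc_ssub (le_refl i) hr2.le (Or.inr hr2) (by omega))
          · have : b = r := by omega
            rw [ha, this]
    · -- b = j, so a > i : M ⊆ [l, j]
      have hb : b = j := by omega
      have hia' : i < a := by omega
      have hla : l ≤ a := hlmin a hia' (by omega) (by rw [← hb]; exact hM.1)
      right
      rcases Nat.lt_or_ge l a with hla' | hla'
      · exfalso
        exact hM.2.2 (Finset.Icc l j) hl3
          (icc_ssub hla'.le (by omega) (Or.inl hla') (by omega))
          (icc_ssub hl1.le (le_refl j) (Or.inl hl1) (by omega))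
      · have : a = l := by omega
        rw [this, hb]
  · ext x
    rw [Finset.mem_union, Finset.mem_Icc, Finset.mem_Icc, Finset.mem_Icc]
    omega
  · ext x
    rw [Finset.mem_inter, Finset.mem_Icc, Finset.mem_Icc, Finset.mem_Icc]
    omega
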